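/- The set H_3^d ⊆ Q_d consisting of 0, e_1 ⊕ e_d, all e_k (1 ≤ k ≤ d), and all e_j ⊕ e_{j+1} (1 ≤ j ≤ d−1) is (d,3)-edge equitable for d ≥ 3, and has cardinality 2d + 1. -/

import Mathlib

/-- Vertices of the hypercube `Q_d`. -/
abbrev Vtx (d : ℕ) := Fin d → ZMod 2

/-- The `i`-th standard basis vector of `(ZMod 2)^d`. -/
def eV {d : ℕ} (i : Fin d) : Vtx d := Pi.single i 1

/-- The number of edges of `Q_d` in direction `i` whose two endpoints both lie
in `S`, i.e. the number of pairs `{t, t ⊕ e_i} ⊆ S`. -/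
def edgeCount {d : ℕ} (S : Finset (Vtx d)) (i : Fin d) : ℕ :=
  (S.filter fun t => t i = 0 ∧ t + eV i ∈ S).card

/-- `S ⊆ Q_d` is a `(d,m)`-edge equitable design: exactly `m` edges of the
induced subgraph in each direction. -/
def Equitable {d : ℕ} (S : Finset (Vtx d)) (m : ℕ) : Prop :=
  ∀ i : Fin d, edgeCount S i = m


lemma eV_self {d : ℕ} (a : Fin d) : eV a a = 1 := by simp [eV]

lemma eV_ne {d : ℕ} {a b : Fin d} (h : b ≠ a) : eV a b = 0 := by
  simp [eV, Pi.single_apply, h]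

lemma eV_eq_one {d : ℕ} {a b : Fin d} (h : eV a b = 1) : b = a := by
  by_contra hc; rw [eV_ne hc] at h; exact zero_ne_one h

lemma pair_apply_one {d : ℕ} {c e a : Fin d} (h : (eV c + eV e) a = 1) :
    a = c ∨ a = e := by
  by_contra hc
  push_neg at hc
  rw [Pi.add_apply, eV_ne hc.1, eV_ne hc.2, add_zero] at h
  exact zero_ne_one h

lemma pair_apply_self {d : ℕ} {c e : Fin d} (h : c ≠ e) : (eV c + eV e) c = 1 := by
  rw [Pi.add_apply, eV_self, eV_ne h, add_zero]

lemma eV_ne_zero {d : ℕ} (a : Fin d) : eV a ≠ 0 := by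
  intro h
  have := congrFun h a
  rw [eV_self] at this
  exact one_ne_zero this

lemma eV_inj {d : ℕ} {a b : Fin d} (h : eV a = eV b) : a = b := by
  have := congrFun h a
  rw [eV_self] at this
  exact eV_eq_one this.symm

lemma pair_ne_zero {d : ℕ} {c e : Fin d} (h : c ≠ e) : eV c + eV e ≠ 0 := by
  intro hz
  have := congrFun hz c
  rw [pair_apply_self h] at this
  exact one_ne_zero this

lemma pair_ne_single {d : ℕ} {c e k : Fin d} (h : c ≠ e) : eV c + eV e ≠ eV k := by
  intro hz
  have h1 := congrFun hz c
  have h2 := congrFun hz e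
  rw [pair_apply_self h] at h1
  rw [Pi.add_apply, eV_ne h.symm, eV_self, zero_add] at h2
  exact h ((eV_eq_one h1.symm).trans (eV_eq_one h2.symm).symm)

lemma pair_eq_pair {d : ℕ} {c e a b : Fin d} (hce : c ≠ e) (hab : a ≠ b)
    (h : eV c + eV e = eV a + eV b) : (c = a ∧ e = b) ∨ (c = b ∧ e = a) := by
  have h1 : c = a ∨ c = b := pair_apply_one (by rw [← congrFun h c, pair_apply_self hce])
  have h2 : e = a ∨ e = b := by
    refine pair_apply_one (a := e) ?_
    rw [← congrFun h e, Pi.add_apply, eV_ne hce.symm, eV_self, zero_add]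
  rcases h1 with rfl | rfl <;> rcases h2 with rfl | rfl <;> tauto

def Sset (d : ℕ) (hd : 2 < d) : Finset (Vtx d) :=
  insert (0 : Vtx d)
    (insert (eV (⟨0, by omega⟩ : Fin d) + eV (⟨d - 1, by omega⟩ : Fin d))
      ((Finset.univ.image fun i : Fin d => eV i) ∪
        (Finset.univ.image fun j : Fin (d - 1) =>
          eV (⟨j.1, by omega⟩ : Fin d) + eV (⟨j.1 + 1, by omega⟩ : Fin d))))

lemma mem_Sset {d : ℕ} (hd : 2 < d) {x : Vtx d} :
    x ∈ Sset d hd ↔ x = 0 ∨ x = eV (⟨0, by omega⟩ : Fin d) + eV (⟨d - 1, by omega⟩ : Fin d)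
      ∨ (∃ k : Fin d, x = eV k)
      ∨ (∃ j : ℕ, ∃ h : j < d - 1,
          x = eV (⟨j, by omega⟩ : Fin d) + eV (⟨j + 1, by omega⟩ : Fin d)) := by
  simp only [Sset, Finset.mem_insert, Finset.mem_union, Finset.mem_image,
    Finset.mem_univ, true_and]
  constructor
  · rintro (h | h | ⟨k, hk⟩ | ⟨j, hj⟩)
    · exact Or.inl h
    · exact Or.inr (Or.inl h)
    · exact Or.inr (Or.inr (Or.inl ⟨k, hk.symm⟩))
    · exact Or.inr (Or.inr (Or.inr ⟨j.1, j.2, hj.symm⟩))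
  · rintro (h | h | ⟨k, hk⟩ | ⟨j, hj, hx⟩)
    · exact Or.inl h
    · exact Or.inr (Or.inl h)
    · exact Or.inr (Or.inr (Or.inl ⟨k, hk.symm⟩))
    · exact Or.inr (Or.inr (Or.inr ⟨⟨j, hj⟩, hx.symm⟩))

lemma no_pair_ext {d : ℕ} (hd : 3 ≤ d) {c e i : Fin d} (hce : c ≠ e)
    (hic : i ≠ c) (hie : i ≠ e) (hy : eV c + eV e + eV i ∈ Sset d hd) : False := by
  have hvi : (eV c + eV e + eV i) i = 1 := by
    rw [Pi.add_apply, Pi.add_apply, eV_ne hic, eV_ne hie, eV_self]; ring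
  have hvc : (eV c + eV e + eV i) c = 1 := by
    rw [Pi.add_apply, pair_apply_self hce, eV_ne hic.symm]; ring
  have hve : (eV c + eV e + eV i) e = 1 := by
    rw [Pi.add_apply, Pi.add_apply, eV_ne hce.symm, eV_self, eV_ne hie.symm]; ring
  rcases (mem_Sset hd).1 hy with h | h | ⟨k, hk⟩ | ⟨j, hj, hx⟩
  · rw [h] at hvi; exact one_ne_zero ((congrFun rfl i).symm.trans hvi).symm
  · have hab : (⟨0, by omega⟩ : Fin d) ≠ ⟨d - 1, by omega⟩ := by
      simp only [ne_eq, Fin.mk.injEq]; omega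
    rw [h] at hvc hve hvi
    have h1 := pair_apply_one hvc
    have h2 := pair_apply_one hve
    have h3 := pair_apply_one hvi
    simp only [Fin.ext_iff] at h1 h2 h3 hce hic hie
    omega
  · rw [hk] at hvc hve
    have h1 := eV_eq_one hvc
    have h2 := eV_eq_one hve
    exact hce (h1.trans h2.symm)
  · have hab : (⟨j, by omega⟩ : Fin d) ≠ ⟨j + 1, by omega⟩ := by
      simp only [ne_eq, Fin.mk.injEq]; omega
    rw [hx] at hvc hve hvi
    have h1 := pair_apply_one hvc
    have h2 := pair_apply_one hve
    have h3 := pair_apply_one hvi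
    simp only [Fin.ext_iff] at h1 h2 h3 hce hic hie
    omega

def prevF {d : ℕ} (hd : 2 < d) (i : Fin d) : Fin d :=
  if i.1 = 0 then ⟨d - 1, by omega⟩ else ⟨i.1 - 1, by omega⟩

def nextF {d : ℕ} (hd : 2 < d) (i : Fin d) : Fin d :=
  if h : i.1 = d - 1 then ⟨0, by omega⟩ else ⟨i.1 + 1, by have := i.2; omega⟩

lemma prevF_ne {d : ℕ} (hd : 3 ≤ d) (i : Fin d) : prevF hd i ≠ i := by
  have := i.2
  simp only [prevF]; split <;> simp only [ne_eq, Fin.ext_iff] <;> omega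

lemma nextF_ne {d : ℕ} (hd : 3 ≤ d) (i : Fin d) : nextF hd i ≠ i := by
  have := i.2
  simp only [nextF]; split <;> simp only [ne_eq, Fin.ext_iff] <;> omega

lemma prevF_ne_nextF {d : ℕ} (hd : 3 ≤ d) (i : Fin d) : prevF hd i ≠ nextF hd i := by
  have := i.2
  simp only [prevF, nextF]; split <;> split <;> simp only [ne_eq, Fin.ext_iff] <;> omega

lemma prevF_mem {d : ℕ} (hd : 3 ≤ d) (i : Fin d) :
    eV (prevF hd i) + eV i ∈ Sset d hd := by
  rw [mem_Sset hd]
  by_cases h0 : i.1 = 0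
  · refine Or.inr (Or.inl ?_)
    have hi : i = (⟨0, by omega⟩ : Fin d) := Fin.ext h0
    rw [prevF, if_pos h0, hi, add_comm]
  · refine Or.inr (Or.inr (Or.inr ⟨i.1 - 1, ?_, ?_⟩))
    · have := i.2; omega
    · rw [prevF, if_neg h0]
      congr 1
      exact congrArg eV (Fin.ext (by simp only [Fin.val_mk]; omega))

lemma nextF_mem {d : ℕ} (hd : 3 ≤ d) (i : Fin d) :
    eV (nextF hd i) + eV i ∈ Sset d hd := by
  rw [mem_Sset hd]
  by_cases h0 : i.1 = d - 1
  · refine Or.inr (Or.inl ?_)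
    have hi : i = (⟨d - 1, by omega⟩ : Fin d) := Fin.ext h0
    rw [nextF, dif_pos h0, hi]
  · refine Or.inr (Or.inr (Or.inr ⟨i.1, by have := i.2; omega, ?_⟩))
    rw [nextF, dif_neg h0, add_comm]

lemma ne_of_pair_zero {d : ℕ} {c e i : Fin d} (hce : c ≠ e)
    (h : (eV c + eV e) i = 0) : i ≠ c ∧ i ≠ e := by
  constructor
  · rintro rfl; rw [pair_apply_self hce] at h; exact one_ne_zero h
  · rintro rfl; rw [Pi.add_apply, eV_ne hce.symm, eV_self, zero_add] at h
    exact one_ne_zero h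

lemma filter_eq {d : ℕ} (hd : 3 ≤ d) (i : Fin d) :
    (Sset d hd).filter (fun t => t i = 0 ∧ t + eV i ∈ Sset d hd)
      = {0, eV (prevF hd i), eV (nextF hd i)} := by
  ext x
  simp only [Finset.mem_filter, Finset.mem_insert, Finset.mem_singleton]
  constructor
  · rintro ⟨hxS, hxi, hyS⟩
    rcases (mem_Sset hd).1 hxS with rfl | hx | ⟨k, rfl⟩ | ⟨j, hj, hx⟩
    · exact Or.inl rfl
    · exfalso
      have hce : (⟨0, by omega⟩ : Fin d) ≠ ⟨d - 1, by omega⟩ := by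
        simp only [ne_eq, Fin.ext_iff]; omega
      rw [hx] at hxi hyS
      obtain ⟨hic, hie⟩ := ne_of_pair_zero hce hxi
      exact no_pair_ext hd hce hic hie hyS
    · -- x = eV k
      have hik : i ≠ k := by
        rintro rfl; rw [eV_self] at hxi; exact one_ne_zero hxi
      have hki : k ≠ i := hik.symm
      rcases (mem_Sset hd).1 hyS with hy | hy | ⟨m, hy⟩ | ⟨j, hj, hy⟩
      · exact absurd hy (pair_ne_zero hki)
      · have hab : (⟨0, by omega⟩ : Fin d) ≠ ⟨d - 1, by omega⟩ := by
          simp only [ne_eq, Fin.ext_iff]; omega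
        have := pair_eq_pair hki hab hy
        suffices hs : k = prevF hd i ∨ k = nextF hd i by
          rcases hs with rfl | rfl
          · exact Or.inr (Or.inl rfl)
          · exact Or.inr (Or.inr rfl)
        simp only [Fin.ext_iff] at this ⊢
        have hi2 := i.2
        simp only [prevF, nextF]
        split_ifs <;> simp only [Fin.val_mk] <;> omega
      · exact absurd hy (pair_ne_single hki)
      · have hab : (⟨j, by omega⟩ : Fin d) ≠ ⟨j + 1, by omega⟩ := by
          simp only [ne_eq, Fin.ext_iff]; omega
        have := pair_eq_pair hki hab hy
        suffices hs : k = prevF hd i ∨ k = nextF hd i by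
          rcases hs with rfl | rfl
          · exact Or.inr (Or.inl rfl)
          · exact Or.inr (Or.inr rfl)
        simp only [Fin.ext_iff] at this ⊢
        have hi2 := i.2
        simp only [prevF, nextF]
        split_ifs <;> simp only [Fin.val_mk] <;> omega
    · exfalso
      have hce : (⟨j, by omega⟩ : Fin d) ≠ ⟨j + 1, by omega⟩ := by
        simp only [ne_eq, Fin.ext_iff]; omega
      rw [hx] at hxi hyS
      obtain ⟨hic, hie⟩ := ne_of_pair_zero hce hxi
      exact no_pair_ext hd hce hic hie hyS
  · rintro (rfl | rfl | rfl)
    · refine ⟨(mem_Sset hd).2 (Or.inl rfl), rfl, ?_⟩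
      rw [zero_add]
      exact (mem_Sset hd).2 (Or.inr (Or.inr (Or.inl ⟨i, rfl⟩)))
    · exact ⟨(mem_Sset hd).2 (Or.inr (Or.inr (Or.inl ⟨_, rfl⟩))),
        eV_ne (prevF_ne hd i).symm, prevF_mem hd i⟩
    · exact ⟨(mem_Sset hd).2 (Or.inr (Or.inr (Or.inl ⟨_, rfl⟩))),
        eV_ne (nextF_ne hd i).symm, nextF_mem hd i⟩

lemma edgeCount_Sset {d : ℕ} (hd : 3 ≤ d) (i : Fin d) :
    ((Sset d hd).filter fun t => t i = 0 ∧ t + eV i ∈ Sset d hd).card = 3 := by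
  rw [filter_eq hd i]
  rw [Finset.card_insert_of_notMem, Finset.card_insert_of_notMem,
    Finset.card_singleton]
  · simp only [Finset.mem_singleton]
    intro h
    exact prevF_ne_nextF hd i (eV_inj h)
  · simp only [Finset.mem_insert, Finset.mem_singleton]
    push_neg
    exact ⟨(eV_ne_zero _).symm, (eV_ne_zero _).symm⟩

lemma card_Sset {d : ℕ} (hd : 2 < d) : (Sset d hd).card = 2 * d + 1 := by
  have hab : (⟨0, by omega⟩ : Fin d) ≠ ⟨d - 1, by omega⟩ := by
    simp only [ne_eq, Fin.ext_iff]; omega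
  have hA : (Finset.univ.image fun i : Fin d => eV i).card = d := by
    rw [Finset.card_image_of_injective _ (fun a b h => eV_inj h),
      Finset.card_univ, Fintype.card_fin]
  have hB : (Finset.univ.image fun j : Fin (d - 1) =>
      eV (⟨j.1, by omega⟩ : Fin d) + eV (⟨j.1 + 1, by omega⟩ : Fin d)).card = d - 1 := by
    rw [Finset.card_image_of_injective, Finset.card_univ, Fintype.card_fin]
    intro a b h
    have hc : (⟨a.1, by omega⟩ : Fin d) ≠ ⟨a.1 + 1, by omega⟩ := by
      simp only [ne_eq, Fin.ext_iff]; omega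
    have hc' : (⟨b.1, by omega⟩ : Fin d) ≠ ⟨b.1 + 1, by omega⟩ := by
      simp only [ne_eq, Fin.ext_iff]; omega
    have := pair_eq_pair hc hc' h
    simp only [Fin.ext_iff] at this ⊢
    omega
  have hdisj : Disjoint (Finset.univ.image fun i : Fin d => eV i)
      (Finset.univ.image fun j : Fin (d - 1) =>
        eV (⟨j.1, by omega⟩ : Fin d) + eV (⟨j.1 + 1, by omega⟩ : Fin d)) := by
    rw [Finset.disjoint_left]
    intro x hxA hxB
    simp only [Finset.mem_image, Finset.mem_univ, true_and] at hxA hxB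
    obtain ⟨k, rfl⟩ := hxA
    obtain ⟨j, hj⟩ := hxB
    have hc : (⟨j.1, by omega⟩ : Fin d) ≠ ⟨j.1 + 1, by omega⟩ := by
      simp only [ne_eq, Fin.ext_iff]; omega
    exact pair_ne_single hc hj
  have hp : eV (⟨0, by omega⟩ : Fin d) + eV (⟨d - 1, by omega⟩ : Fin d) ∉
      (Finset.univ.image fun i : Fin d => eV i) ∪
        (Finset.univ.image fun j : Fin (d - 1) =>
          eV (⟨j.1, by omega⟩ : Fin d) + eV (⟨j.1 + 1, by omega⟩ : Fin d)) := by
    simp only [Finset.mem_union, Finset.mem_image, Finset.mem_univ, true_and]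
    push_neg
    constructor
    · exact fun k h => pair_ne_single hab h.symm
    · intro j h
      have hc : (⟨j.1, by omega⟩ : Fin d) ≠ ⟨j.1 + 1, by omega⟩ := by
        simp only [ne_eq, Fin.ext_iff]; omega
      have hj2 := j.2
      have := pair_eq_pair hc hab h
      simp only [Fin.ext_iff] at this
      omega
  have h0 : (0 : Vtx d) ∉
      insert (eV (⟨0, by omega⟩ : Fin d) + eV (⟨d - 1, by omega⟩ : Fin d))
        ((Finset.univ.image fun i : Fin d => eV i) ∪
          (Finset.univ.image fun j : Fin (d - 1) =>
            eV (⟨j.1, by omega⟩ : Fin d) + eV (⟨j.1 + 1, by omega⟩ : Fin d))) := by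
    simp only [Finset.mem_insert, Finset.mem_union, Finset.mem_image,
      Finset.mem_univ, true_and]
    push_neg
    refine ⟨fun h => pair_ne_zero hab h.symm, fun k h => eV_ne_zero k h, ?_⟩
    intro j h
    have hc : (⟨j.1, by omega⟩ : Fin d) ≠ ⟨j.1 + 1, by omega⟩ := by
      simp only [ne_eq, Fin.ext_iff]; omega
    exact pair_ne_zero hc h
  rw [Sset, Finset.card_insert_of_notMem h0, Finset.card_insert_of_notMem hp,
    Finset.card_union_of_disjoint hdisj]
  omega

theorem stmt14 (d : ℕ) (hd : 3 ≤ d) :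
    Equitable
      (insert (0 : Vtx d)
        (insert (eV (⟨0, by omega⟩ : Fin d) + eV (⟨d - 1, by omega⟩ : Fin d))
          ((Finset.univ.image fun i : Fin d => eV i) ∪
            (Finset.univ.image fun j : Fin (d - 1) =>
              eV (⟨j.1, by omega⟩ : Fin d) + eV (⟨j.1 + 1, by omega⟩ : Fin d)))))
      3 ∧
    (insert (0 : Vtx d)
        (insert (eV (⟨0, by omega⟩ : Fin d) + eV (⟨d - 1, by omega⟩ : Fin d))
          ((Finset.univ.image fun i : Fin d => eV i) ∪
            (Finset.univ.image fun j : Fin (d - 1) =>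
              eV (⟨j.1, by omega⟩ : Fin d) + eV (⟨j.1 + 1, by omega⟩ : Fin d))))).card
      = 2 * d + 1 := by
  exact ⟨fun i => edgeCount_Sset hd i, card_Sset hd⟩
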